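/- If the identity permutation in S_n equals a product of m pairwise distinct transpositions with m ≥ 1, then m is even and 6 ≤ m ≤ n(n-1)/2. -/

import Mathlib

open Equiv

-- A transposition is determined by any point it moves.
lemma stmt16_aux_swap_eq {c d e f : ℕ} (hcd : c ≠ d) (hef : e ≠ f)
    (h : Equiv.swap c d e = f) : Equiv.swap c d = Equiv.swap e f := by
  rcases eq_or_ne e c with rfl | hec
  · rw [Equiv.swap_apply_left] at h; subst h; rfl
  rcases eq_or_ne e d with rfl | hed
  · rw [Equiv.swap_apply_right] at h; subst h; exact Equiv.swap_comm _ _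
  · rw [Equiv.swap_apply_of_ne_of_ne hec hed] at h
    exact absurd h hef

lemma stmt16_aux_mem {x y z w u : ℕ} (hxy : x ≠ y) (hzw : z ≠ w)
    (hne : Equiv.swap x y ≠ Equiv.swap z w)
    (hfix : (Equiv.swap x y * Equiv.swap z w) u = u) : u ≠ z ∧ u ≠ w := by
  constructor
  · rintro rfl
    rw [Equiv.Perm.mul_apply, Equiv.swap_apply_left] at hfix
    exact hne ((stmt16_aux_swap_eq hxy (Ne.symm hzw) hfix).trans (Equiv.swap_comm _ _))
  · rintro rfl
    rw [Equiv.Perm.mul_apply, Equiv.swap_apply_right] at hfix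
    exact hne (stmt16_aux_swap_eq hxy hzw hfix)

-- from x,y ∈ {p,q,r}, x ≠ y: swap x y is one of the three transpositions
lemma stmt16_aux_three {p q r x y : ℕ} (hxy : x ≠ y)
    (hx : x = p ∨ x = q ∨ x = r) (hy : y = p ∨ y = q ∨ y = r) :
    Equiv.swap x y = Equiv.swap p q ∨ Equiv.swap x y = Equiv.swap p r ∨
      Equiv.swap x y = Equiv.swap q r := by
  rcases hx with rfl | rfl | rfl <;> rcases hy with rfl | rfl | rfl <;>
    first
      | exact absurd rfl hxy
      | exact Or.inl rfl
      | exact Or.inr (Or.inl rfl)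
      | exact Or.inr (Or.inr rfl)
      | exact Or.inl (Equiv.swap_comm _ _)
      | exact Or.inr (Or.inl (Equiv.swap_comm _ _))
      | exact Or.inr (Or.inr (Equiv.swap_comm _ _))

-- normalized shared-point case
lemma stmt16_aux_shared {p q r x y z w : ℕ} (hxy : x ≠ y) (hzw : z ≠ w)
    (huv : Equiv.swap x y ≠ Equiv.swap z w)
    (hx : x = p ∨ x = q ∨ x = r) (hy : y = p ∨ y = q ∨ y = r)
    (hz : z = p ∨ z = q ∨ z = r) (hw : w = p ∨ w = q ∨ w = r) :
    Equiv.swap x y = Equiv.swap p q ∨ Equiv.swap x y = Equiv.swap p r ∨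
      Equiv.swap z w = Equiv.swap p q ∨ Equiv.swap z w = Equiv.swap p r := by
  rcases stmt16_aux_three hxy hx hy with h1 | h1 | h1
  · exact Or.inl h1
  · exact Or.inr (Or.inl h1)
  rcases stmt16_aux_three hzw hz hw with h2 | h2 | h2
  · exact Or.inr (Or.inr (Or.inl h2))
  · exact Or.inr (Or.inr (Or.inr h2))
  · exact absurd (h1.trans h2.symm) huv

lemma stmt16_aux_nocycle {a b c d p q r : ℕ} (hab : a ≠ b) (hcd : c ≠ d)
    (hac : a ≠ c) (had : a ≠ d) (hbc : b ≠ c) (hbd : b ≠ d)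
    (hpq : p ≠ q) (hpr : p ≠ r) (hqr : q ≠ r)
    (heq : Equiv.swap a b * Equiv.swap c d = Equiv.swap p q * Equiv.swap p r) : False := by
  have hdisj : (Equiv.swap a b).Disjoint (Equiv.swap c d) := by
    intro u
    by_cases hu : u = a ∨ u = b
    · right
      rcases hu with rfl | rfl
      · exact Equiv.swap_apply_of_ne_of_ne hac had
      · exact Equiv.swap_apply_of_ne_of_ne hbc hbd
    · push_neg at hu
      exact Or.inl (Equiv.swap_apply_of_ne_of_ne hu.1 hu.2)
  have hg2 : (Equiv.swap a b * Equiv.swap c d) * (Equiv.swap a b * Equiv.swap c d) = 1 := by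
    have hc := hdisj.commute.eq
    calc (Equiv.swap a b * Equiv.swap c d) * (Equiv.swap a b * Equiv.swap c d)
        = Equiv.swap a b * (Equiv.swap c d * Equiv.swap a b) * Equiv.swap c d := by
          group
      _ = Equiv.swap a b * (Equiv.swap a b * Equiv.swap c d) * Equiv.swap c d := by
          rw [hc]
      _ = (Equiv.swap a b * Equiv.swap a b) * (Equiv.swap c d * Equiv.swap c d) := by
          group
      _ = 1 := by rw [Equiv.swap_mul_self, Equiv.swap_mul_self, one_mul]
  rw [heq] at hg2
  have h1 := congrArg (fun σ : Equiv.Perm ℕ => σ q) hg2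
  simp only [Equiv.Perm.mul_apply, Equiv.Perm.one_apply] at h1
  rw [Equiv.swap_apply_of_ne_of_ne hpq.symm hqr, Equiv.swap_apply_right,
    Equiv.swap_apply_left, Equiv.swap_apply_of_ne_of_ne hpr.symm hqr.symm] at h1
  exact hqr h1.symm

set_option maxHeartbeats 1600000 in
lemma stmt16_aux_C {a b c d x y z w : ℕ} (hab : a ≠ b) (hcd : c ≠ d)
    (hxy : x ≠ y) (hzw : z ≠ w)
    (hst : Equiv.swap a b ≠ Equiv.swap c d)
    (heq : Equiv.swap a b * Equiv.swap c d = Equiv.swap x y * Equiv.swap z w) :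
    Equiv.swap x y = Equiv.swap a b ∨ Equiv.swap x y = Equiv.swap c d ∨
      Equiv.swap z w = Equiv.swap a b ∨ Equiv.swap z w = Equiv.swap c d := by
  have huv : Equiv.swap x y ≠ Equiv.swap z w := by
    intro h
    rw [h, Equiv.swap_mul_self] at heq
    exact hst (by
      have := congrArg (· * Equiv.swap c d) heq
      simpa [mul_assoc, Equiv.swap_mul_self] using this)
  have heq' : Equiv.swap c d * Equiv.swap a b = Equiv.swap z w * Equiv.swap x y := by
    have := congrArg Inv.inv heq
    simpa [mul_inv_rev, Equiv.swap_inv] using this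
  have hfix : ∀ u, u ≠ a → u ≠ b → u ≠ c → u ≠ d →
      (Equiv.swap x y * Equiv.swap z w) u = u := by
    intro u h1 h2 h3 h4
    rw [← heq, Equiv.Perm.mul_apply, Equiv.swap_apply_of_ne_of_ne h3 h4,
      Equiv.swap_apply_of_ne_of_ne h1 h2]
  have hfix' : ∀ u, u ≠ a → u ≠ b → u ≠ c → u ≠ d →
      (Equiv.swap z w * Equiv.swap x y) u = u := by
    intro u h1 h2 h3 h4
    rw [← heq', Equiv.Perm.mul_apply, Equiv.swap_apply_of_ne_of_ne h1 h2,
      Equiv.swap_apply_of_ne_of_ne h3 h4]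
  have hz4 : z = a ∨ z = b ∨ z = c ∨ z = d := by
    by_contra h; push_neg at h
    exact (stmt16_aux_mem hxy hzw huv (hfix z h.1 h.2.1 h.2.2.1 h.2.2.2)).1 rfl
  have hw4 : w = a ∨ w = b ∨ w = c ∨ w = d := by
    by_contra h; push_neg at h
    exact (stmt16_aux_mem hxy hzw huv (hfix w h.1 h.2.1 h.2.2.1 h.2.2.2)).2 rfl
  have hx4 : x = a ∨ x = b ∨ x = c ∨ x = d := by
    by_contra h; push_neg at h
    exact (stmt16_aux_mem hzw hxy huv.symm (hfix' x h.1 h.2.1 h.2.2.1 h.2.2.2)).1 rfl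
  have hy4 : y = a ∨ y = b ∨ y = c ∨ y = d := by
    by_contra h; push_neg at h
    exact (stmt16_aux_mem hzw hxy huv.symm (hfix' y h.1 h.2.1 h.2.2.1 h.2.2.2)).2 rfl
  by_cases hshare : a = c ∨ a = d ∨ b = c ∨ b = d
  · -- s and t share a point
    rcases hshare with rfl | rfl | rfl | rfl
    · exact stmt16_aux_shared (p := a) (q := b) (r := d) hxy hzw huv
        (by omega) (by omega) (by omega) (by omega)
    · rw [Equiv.swap_comm c a]
      exact stmt16_aux_shared (p := a) (q := b) (r := c) hxy hzw huv
        (by omega) (by omega) (by omega) (by omega)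
    · rw [Equiv.swap_comm a b]
      exact stmt16_aux_shared (p := b) (q := a) (r := d) hxy hzw huv
        (by omega) (by omega) (by omega) (by omega)
    · rw [Equiv.swap_comm a b, Equiv.swap_comm c b]
      exact stmt16_aux_shared (p := b) (q := a) (r := c) hxy hzw huv
        (by omega) (by omega) (by omega) (by omega)
  · push_neg at hshare
    obtain ⟨hac, had, hbc, hbd⟩ := hshare
    by_cases hshare2 : x = z ∨ x = w ∨ y = z ∨ y = w
    · exfalso
      rcases hshare2 with rfl | rfl | rfl | rfl
      · exact stmt16_aux_nocycle hab hcd hac had hbc hbd hxy hzw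
          (fun h => huv (by rw [h])) heq
      · rw [Equiv.swap_comm z x] at heq
        exact stmt16_aux_nocycle hab hcd hac had hbc hbd hxy hzw.symm
          (fun h => huv (by rw [h, Equiv.swap_comm z x])) heq
      · rw [Equiv.swap_comm x y] at heq
        exact stmt16_aux_nocycle hab hcd hac had hbc hbd hxy.symm hzw
          (fun h => huv (by rw [← h, Equiv.swap_comm x y])) heq
      · rw [Equiv.swap_comm x y, Equiv.swap_comm z y] at heq
        exact stmt16_aux_nocycle hab hcd hac had hbc hbd hxy.symm hzw.symm
          (fun h => huv (by rw [h, Equiv.swap_comm z y])) heq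
    · push_neg at hshare2
      obtain ⟨hxz, hxw, hyz, hyw⟩ := hshare2
      have hga : (Equiv.swap x y * Equiv.swap z w) a = b := by
        rw [← heq, Equiv.Perm.mul_apply, Equiv.swap_apply_of_ne_of_ne hac had,
          Equiv.swap_apply_left]
      by_cases hax : a = x
      · subst hax
        rw [Equiv.Perm.mul_apply, Equiv.swap_apply_of_ne_of_ne hxz hxw,
          Equiv.swap_apply_left] at hga
        subst hga; exact Or.inl rfl
      by_cases hay : a = y
      · subst hay
        rw [Equiv.Perm.mul_apply, Equiv.swap_apply_of_ne_of_ne hyz hyw,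
          Equiv.swap_apply_right] at hga
        subst hga; exact Or.inl (Equiv.swap_comm _ _)
      by_cases haz : a = z
      · subst haz
        rw [Equiv.Perm.mul_apply, Equiv.swap_apply_left,
          Equiv.swap_apply_of_ne_of_ne (Ne.symm hxw) (Ne.symm hyw)] at hga
        subst hga; exact Or.inr (Or.inr (Or.inl rfl))
      by_cases haw : a = w
      · subst haw
        rw [Equiv.Perm.mul_apply, Equiv.swap_apply_right,
          Equiv.swap_apply_of_ne_of_ne (Ne.symm hxz) (Ne.symm hyz)] at hga
        subst hga; exact Or.inr (Or.inr (Or.inl (Equiv.swap_comm _ _)))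
      · rw [Equiv.Perm.mul_apply,
          Equiv.swap_apply_of_ne_of_ne haz haw,
          Equiv.swap_apply_of_ne_of_ne hax hay] at hga
        exact absurd hga hab


lemma stmt16_two {a b c d : ℕ} (hab : a ≠ b) (hcd : c ≠ d)
    (hne : Equiv.swap a b ≠ Equiv.swap c d)
    (h : Equiv.swap a b * Equiv.swap c d = 1) : False := by
  apply hne
  have := congrArg (· * Equiv.swap c d) h
  simpa [mul_assoc, Equiv.swap_mul_self] using this

lemma stmt16_four {a b c d e f g h : ℕ} (h1 : a ≠ b) (h2 : c ≠ d) (h3 : e ≠ f) (h4 : g ≠ h)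
    (n12 : Equiv.swap a b ≠ Equiv.swap c d) (n13 : Equiv.swap a b ≠ Equiv.swap e f)
    (n14 : Equiv.swap a b ≠ Equiv.swap g h) (n23 : Equiv.swap c d ≠ Equiv.swap e f)
    (n24 : Equiv.swap c d ≠ Equiv.swap g h) (n34 : Equiv.swap e f ≠ Equiv.swap g h)
    (hp : Equiv.swap a b * (Equiv.swap c d * (Equiv.swap e f * Equiv.swap g h)) = 1) :
    False := by
  have h2' : (Equiv.swap a b * Equiv.swap c d) * (Equiv.swap e f * Equiv.swap g h) = 1 := by
    rw [← hp]; group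
  have heq : Equiv.swap a b * Equiv.swap c d = Equiv.swap g h * Equiv.swap e f := by
    have := mul_eq_one_iff_eq_inv.mp h2'
    simpa [mul_inv_rev, Equiv.swap_inv] using this
  rcases stmt16_aux_C h1 h2 h4 h3 n12 heq with H | H | H | H
  exacts [n14 H.symm, n24 H.symm, n13 H.symm, n23 H.symm]

open Equiv Equiv.Perm

lemma stmt16_swap_via (n : ℕ) (i j : Fin (n + 1)) :
    Equiv.Perm.viaEmbeddingHom Fin.valEmbedding (Equiv.swap i j)
      = Equiv.swap (i : ℕ) (j : ℕ) := by
  rw [Equiv.Perm.viaEmbeddingHom_apply]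
  ext u
  by_cases hu : u < n + 1
  · have : u = Fin.valEmbedding (⟨u, hu⟩ : Fin (n + 1)) := rfl
    rw [this, Equiv.Perm.viaEmbedding_apply]
    simp [Equiv.swap_apply_def, Fin.ext_iff, apply_ite (Fin.val)]
  · rw [Equiv.Perm.viaEmbedding_apply_of_notMem]
    · rw [Equiv.swap_apply_of_ne_of_ne]
      · exact fun h => hu (h ▸ i.isLt)
      · exact fun h => hu (h ▸ j.isLt)
    · rintro ⟨v, rfl⟩
      exact hu v.isLt

noncomputable def stmt16_phi (n : ℕ) : Equiv.Perm (Fin (n + 1)) →* Equiv.Perm ℕ :=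
  Equiv.Perm.viaEmbeddingHom Fin.valEmbedding

def stmt16_f (n : ℕ) (p : ℕ × ℕ) : Equiv.Perm (Fin (n + 1)) :=
  Equiv.swap ⟨p.1 % (n + 1), Nat.mod_lt _ n.succ_pos⟩
    ⟨p.2 % (n + 1), Nat.mod_lt _ n.succ_pos⟩

lemma stmt16_phi_f {n : ℕ} {p : ℕ × ℕ} (h1 : p.1 ≤ n) (h2 : p.2 ≤ n) :
    stmt16_phi n (stmt16_f n p) = Equiv.swap p.1 p.2 := by
  rw [stmt16_phi, stmt16_f, stmt16_swap_via]
  show Equiv.swap (p.1 % (n + 1)) (p.2 % (n + 1)) = _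
  rw [Nat.mod_eq_of_lt (by omega), Nat.mod_eq_of_lt (by omega)]

lemma stmt16_even (n : ℕ) (L : List (ℕ × ℕ))
    (hL : ∀ p ∈ L, p.1 ≤ n ∧ p.2 ≤ n ∧ p.1 ≠ p.2)
    (hprod : (L.map fun p => Equiv.swap p.1 p.2).prod = 1) : Even L.length := by
  have hmap : (L.map (stmt16_f n)).map (stmt16_phi n) = L.map fun p => Equiv.swap p.1 p.2 := by
    rw [List.map_map]
    apply List.map_congr_left
    intro p hp
    obtain ⟨h1, h2, h3⟩ := hL p hp
    exact stmt16_phi_f h1 h2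
  have hprod' : (L.map (stmt16_f n)).prod = 1 := by
    apply Equiv.Perm.viaEmbeddingHom_injective (Fin.valEmbedding (n := n + 1))
    show stmt16_phi n _ = _
    rw [map_list_prod (stmt16_phi n) (L.map (stmt16_f n)), hmap, hprod, map_one]
  have hsign : ((L.map (stmt16_f n)).map Equiv.Perm.sign).prod = 1 := by
    rw [← map_list_prod, hprod', map_one]
  rw [List.prod_eq_pow_card ((L.map (stmt16_f n)).map Equiv.Perm.sign) (-1) ?_] at hsign
  · simp only [List.length_map] at hsign
    by_contra hodd
    rw [Nat.not_even_iff_odd] at hodd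
    rw [Odd.neg_one_pow hodd] at hsign
    exact absurd hsign (by decide)
  · intro x hx
    simp only [List.mem_map] at hx
    obtain ⟨σ, ⟨p, hp, rfl⟩, rfl⟩ := hx
    obtain ⟨h1, h2, h3⟩ := hL p hp
    apply Equiv.Perm.sign_swap
    simp only [ne_eq, Fin.mk.injEq, stmt16_f]
    rw [Nat.mod_eq_of_lt (by omega), Nat.mod_eq_of_lt (by omega)]
    exact h3




lemma stmt16_pairset {a b c d : ℕ} (hab : a ≠ b)
    (h : ({a, b} : Finset ℕ) = {c, d}) : Equiv.swap a b = Equiv.swap c d := by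
  have ha : a = c ∨ a = d := by
    have : a ∈ ({c, d} : Finset ℕ) := h ▸ (by simp)
    simpa using this
  have hb : b = c ∨ b = d := by
    have : b ∈ ({c, d} : Finset ℕ) := h ▸ (by simp)
    simpa using this
  rcases ha with rfl | rfl <;> rcases hb with rfl | rfl
  · exact absurd rfl hab
  · rfl
  · exact Equiv.swap_comm _ _
  · exact absurd rfl hab

/-- Theorem 4 (necessity): if the identity of `S_n` is a product of `m ≥ 1`
pairwise distinct transpositions, then `m` is even and `6 ≤ m ≤ n(n-1)/2`. -/
theorem stmt16 (n m : ℕ) (hm : 1 ≤ m) (L : List (ℕ × ℕ))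
    (hlen : L.length = m)
    (hL : ∀ p ∈ L, p.1 ≠ p.2 ∧ p.1 ∈ Finset.Icc 1 n ∧ p.2 ∈ Finset.Icc 1 n)
    (hnodup : (L.map fun p => Equiv.swap p.1 p.2).Nodup)
    (hprod : (L.map fun p => Equiv.swap p.1 p.2).prod = 1) :
    Even m ∧ 6 ≤ m ∧ m ≤ n * (n - 1) / 2 := by
  subst hlen
  have hL' : ∀ p ∈ L, p.1 ≤ n ∧ p.2 ≤ n ∧ p.1 ≠ p.2 := by
    intro p hp
    obtain ⟨h1, h2, h3⟩ := hL p hp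
    rw [Finset.mem_Icc] at h2 h3
    exact ⟨h2.2, h3.2, h1⟩
  have heven := stmt16_even n L hL' hprod
  refine ⟨heven, ?_, ?_⟩
  · have h2 : L.length ≠ 2 := by
      intro hl
      obtain ⟨p1, p2, rfl⟩ := List.length_eq_two.mp hl
      simp only [List.map_cons, List.map_nil, List.prod_cons, List.prod_nil, mul_one] at hprod
      simp only [List.map_cons, List.map_nil, List.nodup_cons, List.mem_cons,
        List.mem_singleton, List.not_mem_nil, or_false, List.nodup_nil, and_true,
        not_false_eq_true] at hnodup
      exact stmt16_two (hL p1 (by simp)).1 (hL p2 (by simp)).1 (by tauto) hprod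
    have h4 : L.length ≠ 4 := by
      intro hl
      rcases L with _ | ⟨p1, _ | ⟨p2, _ | ⟨p3, _ | ⟨p4, _ | ⟨p5, L⟩⟩⟩⟩⟩ <;>
        simp only [List.length_cons, List.length_nil] at hl
      · omega
      · omega
      · omega
      · omega
      · simp only [List.map_cons, List.map_nil, List.prod_cons, List.prod_nil,
          mul_one] at hprod
        simp only [List.map_cons, List.map_nil, List.nodup_cons, List.mem_cons,
          List.mem_singleton, List.not_mem_nil, or_false, List.nodup_nil, and_true,
          not_or] at hnodup
        exact stmt16_four (hL p1 (by simp)).1 (hL p2 (by simp)).1 (hL p3 (by simp)).1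
          (hL p4 (by simp)).1 (by tauto) (by tauto) (by tauto) (by tauto)
          (by tauto) (by tauto) hprod
      · omega
    obtain ⟨k, hk⟩ := heven
    omega
  · have hinj := List.inj_on_of_nodup_map hnodup
    have hnd2 : (L.map fun p => ({p.1, p.2} : Finset ℕ)).Nodup := by
      refine List.Nodup.map_on ?_ hnodup.of_map
      intro p hp q hq hpq
      exact hinj hp hq (stmt16_pairset (hL p hp).1 hpq)
    calc L.length = (L.map fun p => ({p.1, p.2} : Finset ℕ)).toFinset.card := by
          rw [List.toFinset_card_of_nodup hnd2, List.length_map]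
      _ ≤ (Finset.powersetCard 2 (Finset.Icc 1 n)).card := by
          apply Finset.card_le_card
          intro s hs
          simp only [List.mem_toFinset, List.mem_map] at hs
          obtain ⟨p, hp, rfl⟩ := hs
          obtain ⟨h1, h2, h3⟩ := hL p hp
          rw [Finset.mem_powersetCard]
          refine ⟨?_, Finset.card_pair h1⟩
          intro u hu
          simp only [Finset.mem_insert, Finset.mem_singleton] at hu
          rcases hu with rfl | rfl
          exacts [h2, h3]
      _ = n * (n - 1) / 2 := by
          rw [Finset.card_powersetCard, Nat.card_Icc, Nat.add_sub_cancel,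
            Nat.choose_two_right]
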